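/- Let M be an n×n complex matrix and fix a proper nonempty subset S of indices and a vertex v ∉ S in an intermediate subset T with S ⊆ T ⊆ {1,…,n}. Then reducing M first over T and then over S gives the same result as reducing M directly over S: R_S(R_T(M))(λ) = R_S(M)(λ) for all λ where both sides are defined (i.e., λ not an eigenvalue of the relevant complement submatrices). -/

import Mathlib

open Matrix

/-- The isospectral reduction of a square matrix over the indices satisfying `p`,
evaluated at `λ`. -/
noncomputable def isoReduction {m : Type*} [Fintype m] [DecidableEq m]
    (M : Matrix m m ℂ) (p : m → Prop) [DecidablePred p] (lam : ℂ) :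
    Matrix {i // p i} {i // p i} ℂ :=
  M.toBlock p p -
    M.toBlock p (fun i => ¬ p i) *
      (M.toBlock (fun i => ¬ p i) (fun i => ¬ p i) - lam • 1)⁻¹ *
        M.toBlock (fun i => ¬ p i) p

set_option maxHeartbeats 1000000

namespace SeqRed
variable {m : Type*} [Fintype m] [DecidableEq m]

def eqP (p q : m → Prop) (hpq : ∀ i, p i → q i) :
    {x : {j // q j} // p x.val} ≃ {i // p i} where
  toFun x := ⟨x.val.val, x.prop⟩
  invFun i := ⟨⟨i.val, hpq _ i.prop⟩, i.prop⟩
  left_inv _ := rfl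
  right_inv _ := rfl

def eqSplit (p q : m → Prop) [DecidablePred q] (hpq : ∀ i, p i → q i) :
    {i // ¬ p i} ≃ {x : {j // q j} // ¬ p x.val} ⊕ {i // ¬ q i} where
  toFun x := if h : q x.val then Sum.inl ⟨⟨x.val, h⟩, x.prop⟩ else Sum.inr ⟨x.val, h⟩
  invFun s := s.elim (fun u => ⟨u.val.val, u.prop⟩) (fun w => ⟨w.val, fun hp => w.prop (hpq _ hp)⟩)
  left_inv x := by by_cases h : q x.val <;> simp [h]
  right_inv s := by
    cases s with
    | inl u => simp [u.val.prop]
    | inr w => simp [w.prop]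

section Blocks
variable (M : Matrix m m ℂ) (p q : m → Prop) [DecidablePred p] [DecidablePred q] (lam : ℂ)

noncomputable def bA : Matrix {x : {j // q j} // p x.val} {x : {j // q j} // p x.val} ℂ :=
  of fun x y => M x.1.1 y.1.1
noncomputable def bB : Matrix {x : {j // q j} // p x.val} {x : {j // q j} // ¬ p x.val} ℂ :=
  of fun x u => M x.1.1 u.1.1
noncomputable def bC : Matrix {x : {j // q j} // p x.val} {i // ¬ q i} ℂ :=
  of fun x w => M x.1.1 w.1
noncomputable def bD : Matrix {x : {j // q j} // ¬ p x.val} {x : {j // q j} // p x.val} ℂ :=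
  of fun u y => M u.1.1 y.1.1
noncomputable def bG : Matrix {i // ¬ q i} {x : {j // q j} // p x.val} ℂ :=
  of fun w y => M w.1 y.1.1
noncomputable def bE : Matrix {x : {j // q j} // ¬ p x.val} {x : {j // q j} // ¬ p x.val} ℂ :=
  of fun u u' => M u.1.1 u'.1.1
noncomputable def bF : Matrix {x : {j // q j} // ¬ p x.val} {i // ¬ q i} ℂ :=
  of fun u w => M u.1.1 w.1
noncomputable def bH : Matrix {i // ¬ q i} {x : {j // q j} // ¬ p x.val} ℂ :=
  of fun w u => M w.1 u.1.1
noncomputable def bK : Matrix {i // ¬ q i} {i // ¬ q i} ℂ :=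
  M.toBlock (fun i => ¬ q i) (fun i => ¬ q i) - lam • 1
noncomputable def bS : Matrix {x : {j // q j} // ¬ p x.val} {x : {j // q j} // ¬ p x.val} ℂ :=
  (bE M p q - lam • 1) - bF M p q * (bK M q lam)⁻¹ * bH M p q

lemma block1 : (isoReduction M q lam).toBlock (fun x => p x.val) (fun x => p x.val)
    = bA M p q - bC M p q * (bK M q lam)⁻¹ * bG M p q := by
  ext x y
  simp [isoReduction, toBlock_apply, Matrix.sub_apply, mul_apply, bA, bC, bG, bK]

lemma block2 : (isoReduction M q lam).toBlock (fun x => p x.val) (fun x => ¬ p x.val)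
    = bB M p q - bC M p q * (bK M q lam)⁻¹ * bH M p q := by
  ext x y
  simp [isoReduction, toBlock_apply, Matrix.sub_apply, mul_apply, bB, bC, bH, bK]

lemma block3 : (isoReduction M q lam).toBlock (fun x => ¬ p x.val) (fun x => ¬ p x.val) - lam • 1
    = bS M p q lam := by
  ext x y
  simp only [isoReduction, bS, bE, bF, bH, bK, toBlock_apply, Matrix.sub_apply, mul_apply, of_apply,
    Matrix.smul_apply, one_apply, smul_eq_mul, Subtype.ext_iff]
  ring_nf

lemma block4 : (isoReduction M q lam).toBlock (fun x => ¬ p x.val) (fun x => p x.val)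
    = bD M p q - bF M p q * (bK M q lam)⁻¹ * bG M p q := by
  ext x y
  simp [isoReduction, toBlock_apply, Matrix.sub_apply, mul_apply, bD, bF, bG, bK]


lemma blockY (hpq : ∀ i, p i → q i) :
    (M.toBlock (fun i => ¬ p i) (fun i => ¬ p i) - lam • 1).submatrix
        (eqSplit p q hpq).symm (eqSplit p q hpq).symm
    = fromBlocks (bE M p q - lam • 1) (bF M p q) (bH M p q) (bK M q lam) := by
  ext x y
  cases x with
  | inl u => cases y with
    | inl u' =>
      simp [eqSplit, bE, toBlock_apply, one_apply, Subtype.ext_iff]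
    | inr w =>
      simp [eqSplit, bF, toBlock_apply, one_apply, Subtype.ext_iff]
      intro h
      exact absurd (h ▸ u.1.2) w.2
  | inr w => cases y with
    | inl u =>
      simp [eqSplit, bH, toBlock_apply, one_apply, Subtype.ext_iff]
      intro h
      exact absurd (h ▸ w.2) (not_not_intro u.1.2)
    | inr w' =>
      simp [eqSplit, bK, toBlock_apply, one_apply, Subtype.ext_iff]

lemma blockRow (hpq : ∀ i, p i → q i) :
    (M.toBlock p (fun i => ¬ p i)).submatrix (eqP p q hpq) (eqSplit p q hpq).symm
      = fromCols (bB M p q) (bC M p q) := by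
  ext x y
  cases y <;> rfl

lemma blockCol (hpq : ∀ i, p i → q i) :
    (M.toBlock (fun i => ¬ p i) p).submatrix (eqSplit p q hpq).symm (eqP p q hpq)
      = fromRows (bD M p q) (bG M p q) := by
  ext x y
  cases x <;> rfl

lemma blockA (hpq : ∀ i, p i → q i) :
    (M.toBlock p p).submatrix (eqP p q hpq) (eqP p q hpq) = bA M p q := by
  ext x y; rfl


theorem main (hpq : ∀ i, p i → q i)
    (h1 : (M.toBlock (fun i => ¬ q i) (fun i => ¬ q i) - lam • 1).det ≠ 0)
    (h3 : (((isoReduction M q lam).toBlock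
        (fun x => ¬ p x.val) (fun x => ¬ p x.val)) - lam • 1).det ≠ 0) :
    isoReduction (isoReduction M q lam) (fun x => p x.val) lam
      = (isoReduction M p lam).submatrix (eqP p q hpq) (eqP p q hpq) := by
  haveI hK : Invertible (bK M q lam) :=
    (bK M q lam).invertibleOfIsUnitDet (isUnit_iff_ne_zero.mpr h1)
  have hKinv : ⅟ (bK M q lam) = (bK M q lam)⁻¹ := invOf_eq_nonsing_inv _
  have hSdet : (bS M p q lam).det ≠ 0 := by rw [← block3 M p q lam]; exact h3
  haveI hS : Invertible (bS M p q lam) :=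
    (bS M p q lam).invertibleOfIsUnitDet (isUnit_iff_ne_zero.mpr hSdet)
  haveI hS2 : Invertible ((bE M p q - lam • 1) - bF M p q * ⅟ (bK M q lam) * bH M p q) := by
    rw [hKinv]; exact hS
  haveI hY : Invertible (fromBlocks (bE M p q - lam • 1) (bF M p q) (bH M p q) (bK M q lam)) :=
    fromBlocks₂₂Invertible _ _ _ _
  have hYinv : ((M.toBlock (fun i => ¬ p i) (fun i => ¬ p i) - lam • 1).submatrix
        (eqSplit p q hpq).symm (eqSplit p q hpq).symm)⁻¹
      = fromBlocks ((bS M p q lam)⁻¹)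
          (-((bS M p q lam)⁻¹ * bF M p q * (bK M q lam)⁻¹))
          (-((bK M q lam)⁻¹ * bH M p q * (bS M p q lam)⁻¹))
          ((bK M q lam)⁻¹ +
            (bK M q lam)⁻¹ * bH M p q * (bS M p q lam)⁻¹ * bF M p q * (bK M q lam)⁻¹) := by
    rw [blockY M p q lam hpq, ← invOf_eq_nonsing_inv, invOf_fromBlocks₂₂_eq]
    simp only [invOf_eq_nonsing_inv]
    rfl
  -- right-hand side in block form
  have hRHS : (isoReduction M p lam).submatrix (eqP p q hpq) (eqP p q hpq)
      = bA M p q - (fromCols (bB M p q) (bC M p q) *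
          ((M.toBlock (fun i => ¬ p i) (fun i => ¬ p i) - lam • 1).submatrix
            (eqSplit p q hpq).symm (eqSplit p q hpq).symm)⁻¹ *
          fromRows (bD M p q) (bG M p q)) := by
    rw [isoReduction, Matrix.submatrix_sub, Pi.sub_apply, Pi.sub_apply, blockA M p q hpq, ← blockRow M p q hpq,
      ← blockCol M p q hpq, inv_submatrix_equiv, Matrix.submatrix_mul_equiv,
      Matrix.submatrix_mul_equiv]
  rw [hRHS, hYinv]
  -- left-hand side in block form
  rw [show isoReduction (isoReduction M q lam) (fun x => p x.val) lam
      = (bA M p q - bC M p q * (bK M q lam)⁻¹ * bG M p q) -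
        (bB M p q - bC M p q * (bK M q lam)⁻¹ * bH M p q) * (bS M p q lam)⁻¹ *
          (bD M p q - bF M p q * (bK M q lam)⁻¹ * bG M p q) from by
    rw [isoReduction, block1, block2, block3, block4]]
  rw [fromCols_mul_fromBlocks, fromCols_mul_fromRows]
  simp only [Matrix.mul_sub, Matrix.sub_mul, Matrix.mul_add, Matrix.add_mul,
    Matrix.mul_neg, Matrix.neg_mul, Matrix.mul_assoc]
  abel

end Blocks
end SeqRed

/-- Uniqueness of sequential isospectral reductions: for `S ⊆ T`, reducing `M` first over
`T` and then over `S` (at the same `λ`) gives the same result as reducing directly over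
`S`, entrywise, whenever both sides are defined. -/
theorem isoReduction_sequential {n : ℕ} (M : Matrix (Fin n) (Fin n) ℂ)
    (S T : Finset (Fin n)) (hS : S.Nonempty) (hST : S ⊆ T)
    (v : Fin n) (hvT : v ∈ T) (hvS : v ∉ S) (lam : ℂ)
    (h1 : (M.toBlock (fun i => ¬ i ∈ T) (fun i => ¬ i ∈ T) - lam • 1).det ≠ 0)
    (h2 : (M.toBlock (fun i => ¬ i ∈ S) (fun i => ¬ i ∈ S) - lam • 1).det ≠ 0)
    (h3 : (((isoReduction M (fun i => i ∈ T) lam).toBlock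
        (fun i => ¬ (i.val ∈ S)) (fun i => ¬ (i.val ∈ S))) - lam • 1).det ≠ 0) :
    ∀ (i j : Fin n) (hi : i ∈ S) (hj : j ∈ S),
      isoReduction (isoReduction M (fun i => i ∈ T) lam) (fun x => x.val ∈ S) lam
          ⟨⟨i, hST hi⟩, hi⟩ ⟨⟨j, hST hj⟩, hj⟩
        = isoReduction M (fun i => i ∈ S) lam ⟨i, hi⟩ ⟨j, hj⟩ := by
  intro i j hi hj
  have hpq : ∀ i : Fin n, i ∈ S → i ∈ T := fun i h => hST h
  have hF : (Finset.Subtype.fintype T) = (Subtype.fintype fun i : Fin n => i ∈ T) :=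
    Subsingleton.elim _ _
  rw [hF] at h3 ⊢
  have h := SeqRed.main M (fun i => i ∈ S) (fun i => i ∈ T) lam hpq h1 h3
  exact congrFun (congrFun h ⟨⟨i, hST hi⟩, hi⟩) ⟨⟨j, hST hj⟩, hj⟩
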